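/- Consider the cake [0, 2n−1] divided into 2n−1 unit subintervals, where agent 1's measure is Lebesgue measure restricted to the union of the n odd-indexed subintervals (subintervals 1,3,5,...,2n−1), and for j = 2,...,n, agent j's measure is Lebesgue measure restricted to the (2j−2)-th subinterval. With entitlements t_1 = (n−0.9)/n and t_j = 0.9/(n(n−1)) for j ≥ 2, in any t-proportional division agent 1's piece must have nonempty intersection of positive measure with each of his n positive subintervals, and agent 1 cannot receive a single interval intersecting two of his positive subintervals in positive measure; hence agent 1's piece consists of at least n disjoint intervals. -/

import Mathlib

open MeasureTheory Set

noncomputable section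

/-- The piece of agent `i` in a division given by cut points `x` and owner assignment. -/
def piece {n k : ℕ} (x : Fin (k + 2) → ℝ) (owner : Fin (k + 1) → Fin n) (i : Fin n) : Set ℝ :=
  ⋃ (j : Fin (k + 1)) (_ : owner j = i), Set.Ioc (x j.castSucc) (x j.succ)

/-- Agent 1's measure: Lebesgue measure on the union of the `n` odd unit subintervals
`[0,1], [2,3], …, [2n-2, 2n-1]` of the cake `[0, 2n-1]`. -/
def V₁ (n : ℕ) : Measure ℝ :=
  volume.restrict (⋃ m ∈ Finset.range n, Icc (2 * (m:ℝ)) (2 * m + 1))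

/-- Agent `a`'s measure for `a ≠ 0` (agent `j = a+1` in 1-based numbering): Lebesgue measure
on the `(2j-2)`-th unit subinterval, i.e. `[2a-1, 2a]`. -/
def Vother (a : ℕ) : Measure ℝ :=
  volume.restrict (Icc (2 * (a:ℝ) - 1) (2 * a))

lemma pos_of_inter {a b c d : ℝ} (h : 0 < volume (Ioc a b ∩ Icc c d)) :
    a < d ∧ c < b ∧ a < b := by
  have hsub : Ioc a b ∩ Icc c d ⊆ Icc (max a c) (min b d) := by
    rintro y ⟨⟨h1, h2⟩, h3, h4⟩
    exact ⟨max_le h1.le h3, le_min h2 h4⟩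
  have h2 := h.trans_le (measure_mono hsub)
  rw [Real.volume_Icc] at h2
  have h3 : max a c < min b d := by
    have := ENNReal.ofReal_pos.mp h2; linarith
  exact ⟨lt_of_le_of_lt (le_max_left a c) (h3.trans_le (min_le_right b d)),
    lt_of_le_of_lt (le_max_right a c) (h3.trans_le (min_le_left b d)),
    lt_of_le_of_lt (le_max_left a c) (h3.trans_le (min_le_left b d))⟩

lemma Ioc_pieces_disjoint {k : ℕ} {x : Fin (k+2) → ℝ} (hmono : Monotone x)
    {j j' : Fin (k+1)} (h : j ≠ j') :
    Disjoint (Ioc (x j.castSucc) (x j.succ)) (Ioc (x j'.castSucc) (x j'.succ)) := by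
  have key : ∀ p q : Fin (k+1), p < q →
      Disjoint (Ioc (x p.castSucc) (x p.succ)) (Ioc (x q.castSucc) (x q.succ)) := by
    intro p q hpq
    have hle : x p.succ ≤ x q.castSucc := by
      apply hmono
      simp only [Fin.le_def, Fin.lt_def] at *
      simp only [Fin.val_succ, Fin.coe_castSucc]
      omega
    refine Set.disjoint_left.mpr fun y hy hy' => ?_
    exact absurd (hy.2.trans hle) (not_le.mpr hy'.1)
  rcases h.lt_or_gt with hl | hl
  · exact key _ _ hl
  · exact (key _ _ hl).symm

lemma piece_measurable {n k : ℕ} (x : Fin (k + 2) → ℝ) (owner : Fin (k + 1) → Fin n)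
    (i : Fin n) : MeasurableSet (piece x owner i) :=
  MeasurableSet.iUnion fun _ => MeasurableSet.iUnion fun _ => measurableSet_Ioc

/-- In any `t`-proportional division of the cake `[0, 2n-1]` with the measures above and
entitlements `t₁ = (n - 0.9)/n`, `t_j = 0.9/(n(n-1))`, agent 1's piece meets every odd
subinterval in positive measure, no single interval owned by agent 1 meets two distinct odd
subintervals in positive measure, and agent 1 owns at least `n` (nondegenerate) intervals. -/
theorem lower_bound_structure (n : ℕ) (hn : 2 ≤ n)
    (i0 : Fin n) (hi0 : (i0 : ℕ) = 0)
    (V : Fin n → Measure ℝ)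
    (hV1 : V i0 = V₁ n)
    (hVo : ∀ a : Fin n, a ≠ i0 → V a = Vother a)
    (t : Fin n → ℝ)
    (ht1 : t i0 = ((n:ℝ) - 0.9) / n)
    (hto : ∀ a : Fin n, a ≠ i0 → t a = 0.9 / ((n:ℝ) * (n - 1)))
    (k : ℕ) (x : Fin (k + 2) → ℝ) (owner : Fin (k + 1) → Fin n)
    (hmono : Monotone x) (hx0 : x 0 = 0) (hxl : x (Fin.last (k + 1)) = 2 * (n:ℝ) - 1)
    (hprop : ∀ i, ENNReal.ofReal (t i) * V i (Icc (0:ℝ) (2 * n - 1)) ≤ V i (piece x owner i)) :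
    (∀ m < n, 0 < volume (piece x owner i0 ∩ Icc (2 * (m:ℝ)) (2 * m + 1))) ∧
    (∀ j : Fin (k + 1), owner j = i0 →
      ¬ ∃ m₁ m₂ : ℕ, m₁ < n ∧ m₂ < n ∧ m₁ ≠ m₂ ∧
        0 < volume (Ioc (x j.castSucc) (x j.succ) ∩ Icc (2 * (m₁:ℝ)) (2 * m₁ + 1)) ∧
        0 < volume (Ioc (x j.castSucc) (x j.succ) ∩ Icc (2 * (m₂:ℝ)) (2 * m₂ + 1))) ∧
    n ≤ (Finset.univ.filter
          (fun j : Fin (k + 1) => owner j = i0 ∧ x j.castSucc < x j.succ)).card := by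
  classical
  have hnR : (2:ℝ) ≤ n := by exact_mod_cast hn
  set U : Set ℝ := ⋃ m ∈ Finset.range n, Icc (2 * (m:ℝ)) (2 * m + 1) with hU
  have hUsub : U ⊆ Icc (0:ℝ) (2 * n - 1) := by
    rw [hU]
    refine Set.iUnion₂_subset fun m hm => ?_
    have hmn : (m:ℝ) + 1 ≤ n := by exact_mod_cast Finset.mem_range.mp hm
    exact Icc_subset_Icc (by positivity) (by linarith)
  have hUvol : volume U = n := by
    rw [hU, measure_biUnion_finset]
    · have heq : ∀ m ∈ Finset.range n,
          volume (Icc (2 * (m:ℝ)) (2 * m + 1)) = 1 := by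
        intro m _
        rw [Real.volume_Icc]
        norm_num
      rw [Finset.sum_congr rfl heq]
      simp
    · intro m₁ h₁ m₂ h₂ hne
      have key : ∀ p q : ℕ, p < q →
          Disjoint (Icc (2 * (p:ℝ)) (2 * p + 1)) (Icc (2 * (q:ℝ)) (2 * q + 1)) := by
        intro p q hpq
        have : (p:ℝ) + 1 ≤ q := by exact_mod_cast hpq
        refine Set.disjoint_left.mpr fun y hy hy' => ?_
        have := hy.2; have := hy'.1; linarith
      rcases hne.lt_or_gt with h | h
      · exact key _ _ h
      · exact (key _ _ h).symm
    · intro m _; exact measurableSet_Icc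
  have hV1cake : V i0 (Icc (0:ℝ) (2 * n - 1)) = n := by
    rw [hV1, V₁, Measure.restrict_apply measurableSet_Icc, ← hU,
      Set.inter_eq_self_of_subset_right hUsub, hUvol]
  -- Part 1
  have part1 : ∀ m < n, 0 < volume (piece x owner i0 ∩ Icc (2 * (m:ℝ)) (2 * m + 1)) := by
    intro m₀ hm₀
    by_contra hcon
    push_neg at hcon
    have hzero : volume (piece x owner i0 ∩ Icc (2 * (m₀:ℝ)) (2 * m₀ + 1)) = 0 :=
      le_antisymm hcon zero_le
    have hpiece_le : V i0 (piece x owner i0) ≤ ((n - 1 : ℕ) : ENNReal) := by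
      rw [hV1, V₁, Measure.restrict_apply (piece_measurable x owner i0), ← hU]
      have hinter : piece x owner i0 ∩ U =
          ⋃ m ∈ Finset.range n, (piece x owner i0 ∩ Icc (2 * (m:ℝ)) (2 * m + 1)) := by
        rw [hU, Set.inter_iUnion₂]
      rw [hinter]
      calc volume (⋃ m ∈ Finset.range n,
              (piece x owner i0 ∩ Icc (2 * (m:ℝ)) (2 * m + 1)))
          ≤ ∑ m ∈ Finset.range n,
              volume (piece x owner i0 ∩ Icc (2 * (m:ℝ)) (2 * m + 1)) :=
            measure_biUnion_finset_le _ _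
        _ = (∑ m ∈ Finset.range n \ {m₀},
              volume (piece x owner i0 ∩ Icc (2 * (m:ℝ)) (2 * m + 1))) +
              volume (piece x owner i0 ∩ Icc (2 * (m₀:ℝ)) (2 * m₀ + 1)) :=
            (Finset.sum_eq_sum_sdiff_singleton_add (Finset.mem_range.mpr hm₀) _)
        _ ≤ (∑ _m ∈ Finset.range n \ {m₀}, 1) + 0 := by
            refine add_le_add (Finset.sum_le_sum fun m _ => ?_) hzero.le
            calc volume (piece x owner i0 ∩ Icc (2 * (m:ℝ)) (2 * m + 1))
                ≤ volume (Icc (2 * (m:ℝ)) (2 * m + 1)) :=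
                  measure_mono Set.inter_subset_right
              _ = 1 := by rw [Real.volume_Icc]; norm_num
        _ = ((n - 1 : ℕ) : ENNReal) := by
            rw [add_zero, Finset.sum_const, Finset.card_sdiff_of_subset
              (Finset.singleton_subset_iff.mpr (Finset.mem_range.mpr hm₀))]
            simp
    have h := hprop i0
    rw [hV1cake, ht1] at h
    have hfin : ENNReal.ofReal ((n:ℝ) - 0.9) ≤ ENNReal.ofReal ((n:ℝ) - 1) := by
      calc ENNReal.ofReal ((n:ℝ) - 0.9)
          = ENNReal.ofReal (((n:ℝ) - 0.9) / n) * ENNReal.ofReal n := by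
            rw [← ENNReal.ofReal_mul (div_nonneg (by linarith) (by linarith))]
            congr 1
            field_simp
        _ = ENNReal.ofReal (((n:ℝ) - 0.9) / n) * (n : ENNReal) := by
            rw [ENNReal.ofReal_natCast]
        _ ≤ V i0 (piece x owner i0) := h
        _ ≤ ((n - 1 : ℕ) : ENNReal) := hpiece_le
        _ = ENNReal.ofReal ((n:ℝ) - 1) := by
            rw [← ENNReal.ofReal_natCast]
            congr 1
            push_cast [Nat.cast_sub (le_trans one_le_two hn)]
            ring
    have hcontra := (ENNReal.ofReal_le_ofReal_iff (by linarith)).mp hfin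
    linarith
  -- Part 2
  have part2 : ∀ j : Fin (k + 1), owner j = i0 →
      ¬ ∃ m₁ m₂ : ℕ, m₁ < n ∧ m₂ < n ∧ m₁ ≠ m₂ ∧
        0 < volume (Ioc (x j.castSucc) (x j.succ) ∩ Icc (2 * (m₁:ℝ)) (2 * m₁ + 1)) ∧
        0 < volume (Ioc (x j.castSucc) (x j.succ) ∩ Icc (2 * (m₂:ℝ)) (2 * m₂ + 1)) := by
    rintro j hj ⟨m₁, m₂, hm₁, hm₂, hne, hp₁, hp₂⟩
    have key : ∀ p q : ℕ, p < n → q < n → p < q →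
        0 < volume (Ioc (x j.castSucc) (x j.succ) ∩ Icc (2 * (p:ℝ)) (2 * p + 1)) →
        0 < volume (Ioc (x j.castSucc) (x j.succ) ∩ Icc (2 * (q:ℝ)) (2 * q + 1)) → False := by
      intro p q hp hq hpq h1 h2
      obtain ⟨ha1, -, -⟩ := pos_of_inter h1
      obtain ⟨-, hb2, -⟩ := pos_of_inter h2
      have hpq' : (p:ℝ) + 1 ≤ (q:ℝ) := by exact_mod_cast hpq
      have hqn : (q:ℝ) + 1 ≤ (n:ℝ) := by exact_mod_cast hq
      set a : Fin n := ⟨p + 1, by omega⟩ with haa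
      have hai : a ≠ i0 := by
        intro hcon
        have : (a:ℕ) = (i0:ℕ) := by rw [hcon]
        rw [hi0] at this
        simp [haa] at this
      have hca : ((a:ℕ):ℝ) = (p:ℝ) + 1 := by rw [haa]; push_cast; ring
      have hVa_cake : V a (Icc (0:ℝ) (2 * n - 1)) = 1 := by
        rw [hVo a hai, Vother, Measure.restrict_apply measurableSet_Icc,
          Set.inter_eq_self_of_subset_right
            (Icc_subset_Icc (by rw [hca]; linarith [Nat.cast_nonneg (α := ℝ) p])
              (by rw [hca]; linarith)),
          Real.volume_Icc]
        norm_num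
      have hVa_piece : V a (piece x owner a) = 0 := by
        rw [hVo a hai, Vother, Measure.restrict_apply (piece_measurable x owner a)]
        refine le_antisymm ?_ zero_le
        have hsub : piece x owner a ∩ Icc (2 * ((a:ℕ):ℝ) - 1) (2 * (a:ℕ))
            ⊆ {2 * ((a:ℕ):ℝ) - 1} := by
          rintro y ⟨hy₁, hy₂, hy₃⟩
          by_contra hne'
          have hylt : 2 * ((a:ℕ):ℝ) - 1 < y :=
            lt_of_le_of_ne hy₂ (fun hcon => hne' (by simp [← hcon]))
          have hyIoc : y ∈ Ioc (x j.castSucc) (x j.succ) := by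
            constructor
            · rw [hca] at hylt; linarith
            · rw [hca] at hy₃; linarith
          simp only [piece, Set.mem_iUnion] at hy₁
          obtain ⟨j', hj', hyj'⟩ := hy₁
          have hjj : j' ≠ j := fun hcon => hai (by rw [← hj', hcon, hj])
          exact Set.disjoint_left.mp (Ioc_pieces_disjoint hmono hjj) hyj' hyIoc
        calc volume (piece x owner a ∩ Icc (2 * ((a:ℕ):ℝ) - 1) (2 * (a:ℕ)))
            ≤ volume {2 * ((a:ℕ):ℝ) - 1} := measure_mono hsub
          _ = 0 := measure_singleton _
      have h := hprop a
      rw [hVa_cake, hVa_piece, hto a hai, mul_one] at h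
      rw [nonpos_iff_eq_zero, ENNReal.ofReal_eq_zero] at h
      have hpos : (0:ℝ) < 0.9 / ((n:ℝ) * (n - 1)) := by
        apply div_pos (by norm_num)
        nlinarith
      linarith
    rcases hne.lt_or_gt with h | h
    · exact key m₁ m₂ hm₁ hm₂ h hp₁ hp₂
    · exact key m₂ m₁ hm₂ hm₁ h hp₂ hp₁
  refine ⟨part1, part2, ?_⟩
  -- Part 3
  have hex : ∀ m, m < n → ∃ j : Fin (k + 1), owner j = i0 ∧
      0 < volume (Ioc (x j.castSucc) (x j.succ) ∩ Icc (2 * (m:ℝ)) (2 * m + 1)) := by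
    intro m hm
    by_contra hcon
    push_neg at hcon
    have hzero : volume (piece x owner i0 ∩ Icc (2 * (m:ℝ)) (2 * m + 1)) = 0 := by
      have heq : piece x owner i0 ∩ Icc (2 * (m:ℝ)) (2 * m + 1) =
          ⋃ (j : Fin (k + 1)) (_ : owner j = i0),
            (Ioc (x j.castSucc) (x j.succ) ∩ Icc (2 * (m:ℝ)) (2 * m + 1)) := by
        simp [piece, Set.iUnion_inter]
      rw [heq]
      refine measure_iUnion_null fun j => measure_iUnion_null fun hj =>
        le_antisymm (hcon j hj) zero_le
    exact absurd hzero (part1 m hm).ne'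
  choose g hg1 hg2 using hex
  have hn0 : 0 < n := by omega
  set f : ℕ → Fin (k + 1) := fun m => if h : m < n then g m h else g 0 hn0 with hf
  have hmem : ∀ m ∈ Finset.range n, f m ∈ Finset.univ.filter
      (fun j : Fin (k + 1) => owner j = i0 ∧ x j.castSucc < x j.succ) := by
    intro m hm
    have hmn := Finset.mem_range.mp hm
    rw [hf]
    simp only [dif_pos hmn, Finset.mem_filter, Finset.mem_univ, true_and]
    exact ⟨hg1 m hmn, (pos_of_inter (hg2 m hmn)).2.2⟩
  have hinj : Set.InjOn f (Finset.range n) := by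
    intro m₁ hm₁ m₂ hm₂ hfeq
    by_contra hne
    have h₁ := Finset.mem_range.mp (Finset.mem_coe.mp hm₁)
    have h₂ := Finset.mem_range.mp (Finset.mem_coe.mp hm₂)
    rw [hf] at hfeq
    simp only [dif_pos h₁, dif_pos h₂] at hfeq
    exact part2 (g m₁ h₁) (hg1 m₁ h₁)
      ⟨m₁, m₂, h₁, h₂, hne, hg2 m₁ h₁, hfeq ▸ hg2 m₂ h₂⟩
  have := Finset.card_le_card_of_injOn f hmem hinj
  simpa using this
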